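/- Let α ∈ (1,2), d ≥ 1, and define ϱ^0(u,w) := 1/(|w| + u^{1/α})^{d+α} for u > 0, w ∈ ℝ^d. Then for every t > 0 and w ≠ 0: ∫_0^t s^{1-1/α} ϱ^0(s,w) ds ≤ C · min( |w|^{-(d+1-α)}, t^{2-1/α} |w|^{-(d+α)} ) for a constant C depending only on d and α. -/

import Mathlib

open MeasureTheory Set

lemma auxB (d : ℕ) (α r t : ℝ) (hα1 : 1 < α) (hα2 : α < 2) (hr : 0 < r) (ht : 0 < t) :
    ∫ s in Ioo (0:ℝ) t, s ^ (1 - 1/α) * (1 / (r + s ^ (1/α)) ^ ((d:ℝ) + α))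
      ≤ t ^ (2 - 1/α) * r ^ (-((d:ℝ) + α)) := by
  have hα0 : (0:ℝ) < α := by linarith
  have hinv : 1/α < 1 := by rw [div_lt_one hα0]; linarith
  have hp : (-1:ℝ) < 1 - 1/α := by linarith
  have hβ : (0:ℝ) ≤ (d:ℝ) + α := by positivity
  have hg : IntegrableOn (fun s : ℝ => s ^ (1 - 1/α) * r ^ (-((d:ℝ)+α))) (Ioo 0 t) := by
    exact ((intervalIntegrable_iff_integrableOn_Ioo_of_le ht.le).mp
      (intervalIntegral.intervalIntegrable_rpow' hp)).mul_const _
  have hle : ∫ s in Ioo (0:ℝ) t, s ^ (1 - 1/α) * (1 / (r + s ^ (1/α)) ^ ((d:ℝ) + α))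
      ≤ ∫ s in Ioo (0:ℝ) t, s ^ (1 - 1/α) * r ^ (-((d:ℝ)+α)) := by
    refine integral_mono_of_nonneg ?_ hg ?_
    · filter_upwards [ae_restrict_mem measurableSet_Ioo] with s hs
      have hs0 : 0 < s := hs.1
      positivity
    · filter_upwards [ae_restrict_mem measurableSet_Ioo] with s hs
      have hs0 : 0 < s := hs.1
      have h1 : r ^ ((d:ℝ)+α) ≤ (r + s ^ (1/α)) ^ ((d:ℝ)+α) := by
        apply Real.rpow_le_rpow hr.le _ hβ
        have : (0:ℝ) ≤ s ^ (1/α) := Real.rpow_nonneg hs0.le _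
        linarith
      have h2 : 1 / (r + s ^ (1/α)) ^ ((d:ℝ)+α) ≤ 1 / r ^ ((d:ℝ)+α) :=
        one_div_le_one_div_of_le (Real.rpow_pos_of_pos hr _) h1
      have h3 : (1:ℝ) / r ^ ((d:ℝ)+α) = r ^ (-((d:ℝ)+α)) := by
        rw [Real.rpow_neg hr.le, one_div]
      calc s ^ (1 - 1/α) * (1 / (r + s ^ (1/α)) ^ ((d:ℝ) + α))
          ≤ s ^ (1 - 1/α) * (1 / r ^ ((d:ℝ)+α)) :=
            mul_le_mul_of_nonneg_left h2 (Real.rpow_nonneg hs0.le _)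
        _ = s ^ (1 - 1/α) * r ^ (-((d:ℝ)+α)) := by rw [h3]
  refine hle.trans ?_
  rw [integral_mul_const, ← integral_Ioc_eq_integral_Ioo,
    ← intervalIntegral.integral_of_le ht.le, integral_rpow (Or.inl hp)]
  have he : (1 - 1/α) + 1 = 2 - 1/α := by ring
  rw [Real.zero_rpow (by linarith : (1 - 1/α) + 1 ≠ 0), he, sub_zero]
  have h4 : t ^ (2 - 1/α) / (2 - 1/α) ≤ t ^ (2 - 1/α) :=
    div_le_self (Real.rpow_nonneg ht.le _) (by linarith)
  exact mul_le_mul_of_nonneg_right h4 (Real.rpow_nonneg hr.le _)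

lemma auxA (d : ℕ) (hd : 1 ≤ d) (α r t : ℝ) (hα1 : 1 < α) (hα2 : α < 2) (hr : 0 < r)
    (ht : 0 < t) :
    ∫ s in Ioo (0:ℝ) t, s ^ (1 - 1/α) * (1 / (r + s ^ (1/α)) ^ ((d:ℝ) + α))
      ≤ (1 + α/((d:ℝ)+1-α)) * r ^ (-((d:ℝ)+1-α)) := by
  have hα0 : (0:ℝ) < α := by linarith
  have hd1 : (1:ℝ) ≤ (d:ℝ) := by exact_mod_cast hd
  have hda : (0:ℝ) < (d:ℝ)+1-α := by linarith
  have hinv : 1/α < 1 := by rw [div_lt_one hα0]; linarith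
  have hp : (-1:ℝ) < 1 - 1/α := by linarith
  have hβ : (0:ℝ) ≤ (d:ℝ) + α := by positivity
  have hrpos : (0:ℝ) < r ^ (-((d:ℝ)+1-α)) := Real.rpow_pos_of_pos hr _
  have hCnn : (0:ℝ) ≤ α/((d:ℝ)+1-α) := by positivity
  -- key: for u ≤ r^α the integral is at most r^(-(d+1-α))
  have key : ∀ u : ℝ, 0 < u → u ≤ r ^ α →
      ∫ s in Ioo (0:ℝ) u, s ^ (1 - 1/α) * (1 / (r + s ^ (1/α)) ^ ((d:ℝ) + α))
        ≤ r ^ (-((d:ℝ)+1-α)) := by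
    intro u hu hu2
    refine (auxB d α r u hα1 hα2 hr hu).trans ?_
    have h1 : u ^ (2-1/α) ≤ (r^α) ^ (2-1/α) :=
      Real.rpow_le_rpow hu.le hu2 (by linarith)
    calc u^(2-1/α) * r^(-((d:ℝ)+α))
        ≤ (r^α)^(2-1/α) * r^(-((d:ℝ)+α)) :=
          mul_le_mul_of_nonneg_right h1 (Real.rpow_nonneg hr.le _)
      _ = r ^ (-((d:ℝ)+1-α)) := by
          rw [← Real.rpow_mul hr.le, ← Real.rpow_add hr]
          congr 1
          field_simp
          ring
  rcases le_or_gt t (r^α) with h | h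
  · refine (key t ht h).trans ?_
    nlinarith
  · set m := r ^ α with hmdef
    have hm : 0 < m := Real.rpow_pos_of_pos hr α
    have hq : -((d:ℝ)+1)/α < -1 := by
      rw [div_lt_iff₀ hα0]; linarith
    have hmeas : Measurable (fun s : ℝ => s ^ (1 - 1/α) * (1 / (r + s ^ (1/α)) ^ ((d:ℝ) + α))) := by
      fun_prop
    have fnn : ∀ s : ℝ, 0 < s →
        0 ≤ s ^ (1 - 1/α) * (1 / (r + s ^ (1/α)) ^ ((d:ℝ) + α)) := by
      intro s hs0; positivity
    -- pointwise bound near 0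
    have bd1 : ∀ s : ℝ, 0 < s →
        s ^ (1 - 1/α) * (1 / (r + s ^ (1/α)) ^ ((d:ℝ) + α)) ≤ s ^ (1 - 1/α) * r ^ (-((d:ℝ)+α)) := by
      intro s hs0
      have h1 : r ^ ((d:ℝ)+α) ≤ (r + s ^ (1/α)) ^ ((d:ℝ)+α) := by
        apply Real.rpow_le_rpow hr.le _ hβ
        have : (0:ℝ) ≤ s ^ (1/α) := Real.rpow_nonneg hs0.le _
        linarith
      have h2 : 1 / (r + s ^ (1/α)) ^ ((d:ℝ)+α) ≤ 1 / r ^ ((d:ℝ)+α) :=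
        one_div_le_one_div_of_le (Real.rpow_pos_of_pos hr _) h1
      have h3 : (1:ℝ) / r ^ ((d:ℝ)+α) = r ^ (-((d:ℝ)+α)) := by
        rw [Real.rpow_neg hr.le, one_div]
      rw [← h3]
      exact mul_le_mul_of_nonneg_left h2 (Real.rpow_nonneg hs0.le _)
    -- pointwise bound away from 0
    have bd2 : ∀ s : ℝ, 0 < s →
        s ^ (1 - 1/α) * (1 / (r + s ^ (1/α)) ^ ((d:ℝ) + α)) ≤ s ^ (-((d:ℝ)+1)/α) := by
      intro s hs0
      have hs1 : (0:ℝ) < s ^ (1/α) := Real.rpow_pos_of_pos hs0 _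
      have h1 : (s ^ (1/α)) ^ ((d:ℝ)+α) ≤ (r + s ^ (1/α)) ^ ((d:ℝ)+α) :=
        Real.rpow_le_rpow hs1.le (by linarith) hβ
      have h2 : 1 / (r + s ^ (1/α)) ^ ((d:ℝ)+α) ≤ 1 / (s ^ (1/α)) ^ ((d:ℝ)+α) :=
        one_div_le_one_div_of_le (Real.rpow_pos_of_pos hs1 _) h1
      have h3' : 1 / (s ^ (1/α)) ^ ((d:ℝ)+α) = s ^ (-((1/α) * ((d:ℝ)+α))) := by
        rw [Real.rpow_neg hs0.le, Real.rpow_mul hs0.le, one_div]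
      have h3 : s ^ (1 - 1/α) * (1 / (s ^ (1/α)) ^ ((d:ℝ)+α)) = s ^ (-((d:ℝ)+1)/α) := by
        rw [h3', ← Real.rpow_add hs0]
        congr 1
        field_simp
        ring
      calc s ^ (1 - 1/α) * (1 / (r + s ^ (1/α)) ^ ((d:ℝ) + α))
          ≤ s ^ (1 - 1/α) * (1 / (s ^ (1/α)) ^ ((d:ℝ)+α)) :=
            mul_le_mul_of_nonneg_left h2 (Real.rpow_nonneg hs0.le _)
        _ = s ^ (-((d:ℝ)+1)/α) := h3
    -- integrability on the two pieces
    have hg1 : IntegrableOn (fun s : ℝ => s ^ (1 - 1/α) * r ^ (-((d:ℝ)+α))) (Ioo 0 m) :=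
      ((intervalIntegrable_iff_integrableOn_Ioo_of_le hm.le).mp
        (intervalIntegral.intervalIntegrable_rpow' hp)).mul_const _
    have hf1 : IntegrableOn (fun s : ℝ => s ^ (1 - 1/α) * (1 / (r + s ^ (1/α)) ^ ((d:ℝ) + α)))
        (Ioo 0 m) := by
      refine hg1.mono' (hmeas.aestronglyMeasurable) ?_
      filter_upwards [ae_restrict_mem measurableSet_Ioo] with s hs
      rw [Real.norm_eq_abs, abs_of_nonneg (fnn s hs.1)]
      exact bd1 s hs.1
    have hIoi : IntegrableOn (fun s : ℝ => s ^ (-((d:ℝ)+1)/α)) (Ioi m) :=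
      integrableOn_Ioi_rpow_of_lt hq hm
    have hIci : IntegrableOn (fun s : ℝ => s ^ (-((d:ℝ)+1)/α)) (Ici m) :=
      Iff.mpr integrableOn_Ici_iff_integrableOn_Ioi hIoi
    have hIco : IntegrableOn (fun s : ℝ => s ^ (-((d:ℝ)+1)/α)) (Ico m t) :=
      hIci.mono_set Ico_subset_Ici_self
    have hf2 : IntegrableOn (fun s : ℝ => s ^ (1 - 1/α) * (1 / (r + s ^ (1/α)) ^ ((d:ℝ) + α)))
        (Ico m t) := by
      refine hIco.mono' (hmeas.aestronglyMeasurable) ?_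
      filter_upwards [ae_restrict_mem measurableSet_Ico] with s hs
      have hs0 : 0 < s := lt_of_lt_of_le hm hs.1
      rw [Real.norm_eq_abs, abs_of_nonneg (fnn s hs0)]
      exact bd2 s hs0
    -- split the integral
    have hdisj : Disjoint (Ioo (0:ℝ) m) (Ico m t) :=
      disjoint_left.mpr fun x hx hx' => (hx.2.not_ge hx'.1).elim
    have hsplit : ∫ s in Ioo (0:ℝ) t, s ^ (1 - 1/α) * (1 / (r + s ^ (1/α)) ^ ((d:ℝ) + α))
        = (∫ s in Ioo (0:ℝ) m, s ^ (1 - 1/α) * (1 / (r + s ^ (1/α)) ^ ((d:ℝ) + α)))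
          + ∫ s in Ico m t, s ^ (1 - 1/α) * (1 / (r + s ^ (1/α)) ^ ((d:ℝ) + α)) := by
      rw [← Ioo_union_Ico_eq_Ioo hm h.le, setIntegral_union hdisj measurableSet_Ico hf1 hf2]
    rw [hsplit]
    have part1 : (∫ s in Ioo (0:ℝ) m, s ^ (1 - 1/α) * (1 / (r + s ^ (1/α)) ^ ((d:ℝ) + α)))
        ≤ r ^ (-((d:ℝ)+1-α)) := key m hm le_rfl
    have part2 : (∫ s in Ico m t, s ^ (1 - 1/α) * (1 / (r + s ^ (1/α)) ^ ((d:ℝ) + α)))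
        ≤ (α/((d:ℝ)+1-α)) * r ^ (-((d:ℝ)+1-α)) := by
      have step1 : (∫ s in Ico m t, s ^ (1 - 1/α) * (1 / (r + s ^ (1/α)) ^ ((d:ℝ) + α)))
          ≤ ∫ s in Ico m t, s ^ (-((d:ℝ)+1)/α) := by
        refine integral_mono_of_nonneg ?_ hIco ?_
        · filter_upwards [ae_restrict_mem measurableSet_Ico] with s hs
          exact fnn s (lt_of_lt_of_le hm hs.1)
        · filter_upwards [ae_restrict_mem measurableSet_Ico] with s hs
          exact bd2 s (lt_of_lt_of_le hm hs.1)
      have step2 : (∫ s in Ico m t, s ^ (-((d:ℝ)+1)/α)) ≤ ∫ s in Ici m, s ^ (-((d:ℝ)+1)/α) := by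
        refine setIntegral_mono_set hIci ?_ (HasSubset.Subset.eventuallyLE Ico_subset_Ici_self)
        filter_upwards [ae_restrict_mem measurableSet_Ici] with s hs
        exact Real.rpow_nonneg (le_of_lt (lt_of_lt_of_le hm hs)) _
      have hq1ne : -((d:ℝ)+1)/α + 1 ≠ 0 := by
        intro hcon; rw [div_add' _ _ _ hα0.ne'] at hcon
        have := (div_eq_zero_iff.mp hcon).resolve_right hα0.ne'
        linarith
      have em : m ^ (-((d:ℝ)+1)/α + 1) = r ^ (-((d:ℝ)+1-α)) := by
        rw [hmdef, ← Real.rpow_mul hr.le]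
        congr 1
        field_simp
        ring
      have step3 : (∫ s in Ici m, s ^ (-((d:ℝ)+1)/α))
          = (α/((d:ℝ)+1-α)) * r ^ (-((d:ℝ)+1-α)) := by
        rw [integral_Ici_eq_integral_Ioi, integral_Ioi_rpow_of_lt hq hm, ← em,
          div_eq_iff hq1ne]
        field_simp
        ring
      exact step1.trans (step2.trans step3.le)
    have : r ^ (-((d:ℝ)+1-α)) + (α/((d:ℝ)+1-α)) * r ^ (-((d:ℝ)+1-α))
        = (1 + α/((d:ℝ)+1-α)) * r ^ (-((d:ℝ)+1-α)) := by ring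
    linarith

theorem stmt_8 (d : ℕ) (hd : 1 ≤ d) (α : ℝ) (hα : 1 < α ∧ α < 2) :
    ∃ C > 0, ∀ (t : ℝ), 0 < t → ∀ w : EuclideanSpace ℝ (Fin d), w ≠ 0 →
      ∫ s in Ioo (0:ℝ) t, s ^ (1 - 1/α) * (1 / (‖w‖ + s ^ (1/α)) ^ ((d:ℝ) + α))
        ≤ C * min (‖w‖ ^ (-((d:ℝ) + 1 - α))) (t ^ (2 - 1/α) * ‖w‖ ^ (-((d:ℝ) + α))) := by
  obtain ⟨hα1, hα2⟩ := hα
  have hd1 : (1:ℝ) ≤ (d:ℝ) := by exact_mod_cast hd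
  have hda : (0:ℝ) < (d:ℝ)+1-α := by linarith
  have hC : (0:ℝ) < 1 + α/((d:ℝ)+1-α) := by positivity
  refine ⟨1 + α/((d:ℝ)+1-α), hC, fun t ht w hw => ?_⟩
  have hr : 0 < ‖w‖ := norm_pos_iff.mpr hw
  rw [mul_min_of_nonneg _ _ hC.le]
  refine le_min ?_ ?_
  · exact auxA d hd α ‖w‖ t hα1 hα2 hr ht
  · refine (auxB d α ‖w‖ t hα1 hα2 hr ht).trans ?_
    have h0 : 0 ≤ t ^ (2 - 1/α) * ‖w‖ ^ (-((d:ℝ) + α)) := by positivity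
    refine le_mul_of_one_le_left h0 ?_
    have : (0:ℝ) ≤ α/((d:ℝ)+1-α) := by positivity
    linarith
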